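/- For every odd integer m ≥ 1, the set CBFS₂(2m+2) is a non-expandable cross-bifix-free set on BF₂(2m+2); that is, for every bifix-free binary word γ of length 2m+2 with γ ∉ CBFS₂(2m+2), there exists ω ∈ CBFS₂(2m+2) such that some nonempty proper prefix of γ is a suffix of ω, or some nonempty proper prefix of ω is a suffix of γ. -/

import Mathlib

/-- A binary word (as a list of Booleans, `true` = 1, `false` = 0) is a Dyck word
if it has as many 1s as 0s and every prefix has at least as many 1s as 0s. -/
def IsDyck (w : List Bool) : Prop :=
  w.count true = w.count false ∧
  ∀ p : List Bool, p <+: w → p.count false ≤ p.count true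

/-- `DyckLen w n` : `w` is a Dyck word of length `n`. -/
def DyckLen (w : List Bool) (n : ℕ) : Prop := IsDyck w ∧ w.length = n

/-- A word is bifix-free if no nonempty proper prefix of it is also a suffix of it. -/
def BifixFree {A : Type*} (w : List A) : Prop :=
  ∀ p : List A, p ≠ [] → p <+: w → p ≠ w → ¬ p <:+ w

/-- Two (distinct, same-length) words are cross-bifix-free if no nonempty proper
prefix of either one is a suffix of the other. -/
def CrossBifixFree {A : Type*} (w w' : List A) : Prop :=
  (∀ p : List A, p ≠ [] → p <+: w → p ≠ w → ¬ p <:+ w') ∧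
  (∀ p : List A, p ≠ [] → p <+: w' → p ≠ w' → ¬ p <:+ w)

/-- The set of bifix-free binary words of length `n`. -/
def BF (n : ℕ) : Set (List Bool) := {w | w.length = n ∧ BifixFree w}

/-- `CBFS₂(2m+1)` : words `1·α` where `α` is a Dyck word of length `2m`. -/
def CBFSodd (m : ℕ) : Set (List Bool) :=
  {w | ∃ α : List Bool, DyckLen α (2 * m) ∧ w = true :: α}

/-- `CBFS₂(2m+2)` for even `m > 1` : words `α·1·β·0` with `α` a Dyck word of length `2i`,
`β` a Dyck word of length `2(m-i)`, `0 ≤ i ≤ m/2`. -/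
def CBFSevenE (m : ℕ) : Set (List Bool) :=
  {w | ∃ (i : ℕ) (α β : List Bool), i ≤ m / 2 ∧ DyckLen α (2 * i) ∧
    DyckLen β (2 * (m - i)) ∧ w = α ++ true :: β ++ [false]}

/-- `CBFS₂(2m+2)` for odd `m ≥ 1` : words `α·1·β·0` with `α` a Dyck word of length `2i`,
`β` a Dyck word of length `2(m-i)`, `0 ≤ i ≤ (m+1)/2`, excluding the words
`1·α'·0·1·β'·0` with `α'`, `β'` Dyck words of length `m-1`. -/
def CBFSevenO (m : ℕ) : Set (List Bool) :=
  {w | ∃ (i : ℕ) (α β : List Bool), i ≤ (m + 1) / 2 ∧ DyckLen α (2 * i) ∧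
    DyckLen β (2 * (m - i)) ∧ w = α ++ true :: β ++ [false]} \
  {w | ∃ α' β' : List Bool, DyckLen α' (m - 1) ∧ DyckLen β' (m - 1) ∧
    w = true :: α' ++ false :: true :: β' ++ [false]}

namespace CB9

/-- surplus of a word: #1s minus #0s, as an integer -/
def sur (w : List Bool) : ℤ := (w.count true : ℤ) - w.count false

@[simp] lemma sur_nil : sur [] = 0 := by simp [sur]

@[simp] lemma sur_append (a b : List Bool) : sur (a ++ b) = sur a + sur b := by
  simp [sur, List.count_append]; ring

@[simp] lemma sur_cons (b : Bool) (w : List Bool) :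
    sur (b :: w) = (if b then 1 else -1) + sur w := by
  cases b <;> simp [sur, List.count_cons] <;> ring

@[simp] lemma sur_singleton (b : Bool) : sur [b] = if b then 1 else -1 := by
  cases b <;> simp

lemma count_add_count (w : List Bool) : w.count true + w.count false = w.length := by
  induction w with
  | nil => simp
  | cons b w ih => cases b <;> simp [List.count_cons] <;> omega

lemma isDyck_iff (w : List Bool) :
    IsDyck w ↔ sur w = 0 ∧ ∀ k : ℕ, 0 ≤ sur (w.take k) := by
  constructor
  · rintro ⟨h1, h2⟩
    refine ⟨by simp [sur, h1], fun k => ?_⟩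
    have := h2 (w.take k) (List.take_prefix k w)
    simp [sur]; omega
  · rintro ⟨h1, h2⟩
    constructor
    · simp [sur] at h1; omega
    · intro p hp
      rw [List.prefix_iff_eq_take] at hp
      have := h2 p.length
      rw [← hp] at this
      simp [sur] at this; omega

lemma sur_eq_zero_of_isDyck {w : List Bool} (h : IsDyck w) : sur w = 0 :=
  ((isDyck_iff w).1 h).1

lemma take_nonneg_of_isDyck {w : List Bool} (h : IsDyck w) (k : ℕ) :
    0 ≤ sur (w.take k) := ((isDyck_iff w).1 h).2 k

lemma length_even_of_sur_zero {w : List Bool} (h : sur w = 0) :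
    w.length = 2 * w.count true := by
  have := count_add_count w
  simp [sur] at h; omega

lemma isDyck_nil : IsDyck [] := by rw [isDyck_iff]; simp

lemma isDyck_append {a b : List Bool} (ha : IsDyck a) (hb : IsDyck b) :
    IsDyck (a ++ b) := by
  rw [isDyck_iff] at *
  refine ⟨by simp [ha.1, hb.1], fun k => ?_⟩
  rw [List.take_append, sur_append]
  have := ha.2 k
  have := hb.2 (k - a.length)
  omega

/-- a nonempty Dyck word starts with `true` -/
lemma isDyck_head {w : List Bool} (h : IsDyck w) (hne : w ≠ []) :
    ∃ w', w = true :: w' := by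
  cases w with
  | nil => exact absurd rfl hne
  | cons b w' =>
    cases b with
    | false =>
      exfalso
      have := take_nonneg_of_isDyck h 1
      simp at this
    | true => exact ⟨w', rfl⟩

/-- `1·β·0` is Dyck when `β` is -/
lemma isDyck_arch {β : List Bool} (hβ : IsDyck β) :
    IsDyck (true :: β ++ [false]) := by
  rw [isDyck_iff] at *
  constructor
  · simp [hβ.1]
  · intro k
    match k with
    | 0 => simp
    | k + 1 =>
      have h1 := hβ.2 k
      have h2 : (-1 : ℤ) ≤ sur (List.take (k - β.length) [false]) := by
        rcases Nat.eq_zero_or_pos (k - β.length) with h | h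
        · rw [h]; simp
        · rw [List.take_of_length_le (by simp; omega)]; simp
      have h3 : List.take (k+1) (true :: β ++ [false])
          = true :: (List.take k β ++ List.take (k - β.length) [false]) := by
        simp [List.take_succ_cons, List.take_append]
      rw [h3]
      simp only [sur_cons, sur_append, if_true]
      omega

/-- the padding word (10)^k -/
def pad : ℕ → List Bool
  | 0 => []
  | k + 1 => true :: false :: pad k

@[simp] lemma pad_length (k : ℕ) : (pad k).length = 2 * k := by
  induction k with
  | zero => rfl
  | succ k ih => simp [pad, ih]; omega

lemma isDyck_tf : IsDyck [true, false] := by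
  rw [isDyck_iff]
  refine ⟨by simp, fun k => ?_⟩
  match k with
  | 0 => simp
  | 1 => simp
  | k + 2 =>
    rw [List.take_of_length_le (by simp)]
    simp

lemma isDyck_pad (k : ℕ) : IsDyck (pad k) := by
  induction k with
  | zero => exact isDyck_nil
  | succ k ih =>
    have : pad (k + 1) = [true, false] ++ pad k := rfl
    rw [this]
    exact isDyck_append isDyck_tf ih


/-- running surplus at position `k` -/
def f (γ : List Bool) (k : ℕ) : ℤ := sur (γ.take k)

@[simp] lemma f_zero (γ : List Bool) : f γ 0 = 0 := by simp [f]

lemma f_step (γ : List Bool) (k : ℕ) :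
    f γ (k + 1) = f γ k ∨ f γ (k + 1) = f γ k + 1 ∨ f γ (k + 1) = f γ k - 1 := by
  unfold f
  rw [List.take_succ, sur_append]
  cases h : γ[k]? with
  | none => simp
  | some b =>
    cases b
    · right; right; simp; ring
    · right; left; simp

lemma f_step_up {γ : List Bool} {k : ℕ} (h : f γ (k + 1) = f γ k + 1) :
    γ.take (k + 1) = γ.take k ++ [true] := by
  rw [List.take_succ]
  cases hb : γ[k]? with
  | none =>
    exfalso; unfold f at h; rw [List.take_succ, hb] at h
    simp at h; all_goals omega
  | some b =>
    cases b
    · exfalso; unfold f at h; rw [List.take_succ, hb] at h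
      simp at h; all_goals omega
    · rfl

lemma f_step_down {γ : List Bool} {k : ℕ} (h : f γ (k + 1) = f γ k - 1) :
    γ.take (k + 1) = γ.take k ++ [false] := by
  rw [List.take_succ]
  cases hb : γ[k]? with
  | none =>
    exfalso; unfold f at h; rw [List.take_succ, hb] at h
    simp at h; all_goals omega
  | some b =>
    cases b
    · rfl
    · exfalso; unfold f at h; rw [List.take_succ, hb] at h
      simp at h; all_goals omega

/-- discrete intermediate value theorem for the running surplus -/
lemma ivt (γ : List Bool) (c : ℤ) : ∀ a b : ℕ, a ≤ b → f γ a ≤ c → c ≤ f γ b →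
    ∃ k, a ≤ k ∧ k ≤ b ∧ f γ k = c := by
  intro a b
  induction b with
  | zero =>
    intro hab h1 h2
    have ha : a = 0 := Nat.le_zero.1 hab
    subst ha
    exact ⟨0, le_refl _, le_refl _, le_antisymm h1 h2⟩
  | succ b ih =>
    intro hab h1 h2
    rcases Nat.lt_or_ge a (b+1) with hl | hl
    · rcases le_or_gt c (f γ b) with hc | hc
      · obtain ⟨k, hk⟩ := ih (by omega) h1 hc
        exact ⟨k, hk.1, by omega, hk.2.2⟩
      · rcases f_step γ b with hs | hs | hs <;>
          exact ⟨b + 1, by omega, le_refl _, by omega⟩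
    · have ha : a = b + 1 := by omega
      exact ⟨a, le_refl _, by omega, le_antisymm (ha ▸ h1) (ha ▸ h2)⟩

lemma f_add (γ : List Bool) (u j : ℕ) :
    f γ (u + j) = f γ u + sur ((γ.drop u).take j) := by
  unfold f
  rw [List.take_add, sur_append]

lemma f_of_length_le (γ : List Bool) {k : ℕ} (h : γ.length ≤ k) : f γ k = sur γ := by
  simp [f, List.take_of_length_le h]

/-- last-arch decomposition of a nonempty Dyck word -/
lemma dyck_last_arch {γ : List Bool} (h : IsDyck γ) (hne : γ ≠ []) :
    ∃ α β, IsDyck α ∧ IsDyck β ∧ γ = α ++ true :: β ++ [false] := by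
  have hfnn : ∀ k, 0 ≤ f γ k := fun k => take_nonneg_of_isDyck h k
  have hsur : sur γ = 0 := sur_eq_zero_of_isDyck h
  have hlen : 0 < γ.length := List.length_pos_iff.2 hne
  classical
  let P : ℕ → Prop := fun k => f γ k = 0 ∧ k < γ.length
  have hP0 : P 0 := ⟨by simp, hlen⟩
  let t := Nat.findGreatest P (γ.length - 1)
  have hPt : P t := Nat.findGreatest_spec (Nat.zero_le _) hP0
  have hft : f γ t = 0 := hPt.1
  have htlt : t < γ.length := hPt.2
  have hgt : ∀ k, t < k → k < γ.length → 1 ≤ f γ k := by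
    intro k hk1 hk2
    have hne0 : ¬ P k := Nat.findGreatest_is_greatest hk1 (by omega)
    have : ¬ (f γ k = 0) := fun hh => hne0 ⟨hh, hk2⟩
    have := hfnn k
    omega
  have hsurα : sur (γ.take t) = 0 := hft
  have hαD : IsDyck (γ.take t) := by
    rw [isDyck_iff]
    refine ⟨hsurα, fun k => ?_⟩
    rw [List.take_take]
    exact hfnn _
  have hrlen : (γ.drop t).length = γ.length - t := by simp
  have hsurr : sur (γ.drop t) = 0 := by
    have h8 : sur (γ.take t) + sur (γ.drop t) = 0 := by
      rw [← sur_append, List.take_append_drop, hsur]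
    omega
  have hrtake : ∀ j, 0 < j → j < γ.length - t → 1 ≤ sur ((γ.drop t).take j) := by
    intro j hj1 hj2
    have h9 := f_add γ t j
    have h10 := hgt (t + j) (by omega) (by omega)
    omega
  have hrlen2 : 2 ≤ (γ.drop t).length := by
    have he := length_even_of_sur_zero hsurr
    have : (γ.drop t).length ≠ 0 := by omega
    omega
  obtain ⟨b, r', hbr⟩ : ∃ b r', γ.drop t = b :: r' := by
    cases hd : γ.drop t with
    | nil => rw [hd] at hrlen2; simp at hrlen2
    | cons b r' => exact ⟨b, r', rfl⟩
  have hbtrue : b = true := by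
    have h11 := hrtake 1 (by omega) (by omega)
    rw [hbr] at h11
    cases b
    · simp at h11
    · rfl
  obtain ⟨β, c, hβc⟩ : ∃ β c, r' = β ++ [c] := by
    rcases List.eq_nil_or_concat r' with hc | ⟨L, bb, hL⟩
    · exfalso; rw [hbr, hc] at hrlen2; simp at hrlen2
    · exact ⟨L, bb, by rw [hL]; simp⟩
  have hrfull : γ.drop t = (b :: β) ++ [c] := by rw [hbr, hβc]; rfl
  have hlenr : (γ.drop t).length = β.length + 2 := by rw [hrfull]; simp
  have h7 : (γ.drop t).take (β.length + 1) = b :: β := by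
    rw [hrfull]
    simp only [List.cons_append, List.take_succ_cons, List.take_append]
    simp
  have hsurbβ : 1 ≤ sur (b :: β) := by
    have h12 := hrtake (β.length + 1) (by omega) (by rw [← hrlen, hlenr]; omega)
    rw [h7] at h12
    exact h12
  have hsplit : sur (γ.drop t) = sur (b :: β) + sur [c] := by
    rw [hrfull, sur_append]
  have hcfalse : c = false := by
    cases c
    · rfl
    · exfalso
      have h15 : sur [true] = (1:ℤ) := by simp
      rw [hsurr, h15] at hsplit
      omega
  have hβD : IsDyck β := by
    rw [isDyck_iff]
    constructor
    · rw [hbtrue, hcfalse] at hsplit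
      rw [hsurr] at hsplit
      simp at hsplit
      omega
    · intro k
      rcases Nat.lt_or_ge k β.length with hk | hk
      · have h13 := hrtake (k + 1) (by omega) (by omega)
        have h14 : (γ.drop t).take (k + 1) = b :: β.take k := by
          rw [hrfull]
          simp only [List.cons_append, List.take_succ_cons, List.take_append]
          have : k - β.length = 0 := by omega
          rw [this]
          simp
        rw [h14, hbtrue] at h13
        simp at h13
        omega
      · rw [List.take_of_length_le hk]
        rw [hbtrue, hcfalse] at hsplit
        rw [hsurr] at hsplit
        simp at hsplit
        omega
  refine ⟨γ.take t, β, hαD, hβD, ?_⟩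
  conv_lhs => rw [← List.take_append_drop t γ]
  rw [hrfull, hbtrue, hcfalse]
  simp

lemma sur_take_arch {A β : List Bool} (hA : IsDyck A) (hβ : IsDyck β) (m : ℕ)
    (h1 : A.length ≤ m) (h2 : m ≤ A.length + β.length) :
    1 ≤ sur ((A ++ true :: β ++ [false]).take (m+1)) := by
  have e1 : ((A ++ true :: β ++ [false]) : List Bool).take (m+1)
      = A ++ true :: β.take (m - A.length) := by
    rw [List.take_append]
    have h3 : m + 1 - (A ++ true :: β).length = 0 := by simp; omega
    rw [h3]
    simp only [List.take_zero, List.append_nil]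
    rw [List.take_append,
      List.take_of_length_le (show A.length ≤ m+1 by omega)]
    have hm : m + 1 - A.length = (m - A.length) + 1 := by omega
    rw [hm, List.take_succ_cons]
  rw [e1, sur_append, sur_cons]
  have h4 := take_nonneg_of_isDyck hβ (m - A.length)
  have h5 := sur_eq_zero_of_isDyck hA
  simp only [if_true]
  omega

lemma excl_sur {m : ℕ} (hm : 1 ≤ m) {w α' β' : List Bool}
    (hα : DyckLen α' (m-1)) (hβ : DyckLen β' (m-1))
    (hw : w = true :: α' ++ false :: true :: β' ++ [false]) :
    sur (w.take (m+1)) = 0 := by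
  obtain ⟨hαD, hαl⟩ := hα
  obtain ⟨hβD, hβl⟩ := hβ
  subst hw
  have e1 : ((true :: α' ++ false :: true :: β' ++ [false]) : List Bool).take (m+1)
      = (true :: α') ++ [false] := by
    rw [List.take_append]
    have h0 : m + 1 - (true :: α' ++ false :: true :: β').length = 0 := by
      simp [hαl, hβl]; try omega
    rw [h0]
    simp only [List.take_zero, List.append_nil]
    rw [List.take_append,
      List.take_of_length_le (show (true :: α').length ≤ m+1 by simp [hαl]; try omega)]
    have h1 : m + 1 - (true :: α').length = 1 := by simp [hαl]; try omega
    rw [h1]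
    rfl
  rw [e1, sur_append, sur_cons]
  have h5 := sur_eq_zero_of_isDyck hαD
  simp only [if_true]
  simp
  omega



/-- membership helper for `i = 0` words `1·β·0` -/
lemma mem_arch0 {m : ℕ} (hm : 1 ≤ m) {β : List Bool} (hβD : IsDyck β)
    (hβl : β.length = 2*m) : (true :: β ++ [false]) ∈ CBFSevenO m := by
  refine ⟨⟨0, [], β, Nat.zero_le _, ⟨isDyck_nil, rfl⟩, ⟨hβD, by omega⟩, rfl⟩, ?_⟩
  rintro ⟨α', β', hα', hβ', hw⟩
  have h1 := excl_sur hm hα' hβ' hw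
  have h2 : 1 ≤ sur ((([] : List Bool) ++ true :: β ++ [false]).take (m+1)) :=
    sur_take_arch isDyck_nil hβD m (by simp) (by simp [hβl]; try omega)
  simp only [List.nil_append] at h2
  omega

end CB9

open CB9

/-- For every odd `m ≥ 1`, `CBFS₂(2m+2)` is a non-expandable
cross-bifix-free set on `BF₂(2m+2)`. -/
theorem CBFSevenO_nonexpandable (m : ℕ) (hm : 1 ≤ m) (hmo : Odd m) (γ : List Bool)
    (hγ : γ ∈ BF (2 * m + 2)) (hγn : γ ∉ CBFSevenO m) :
    ∃ ω ∈ CBFSevenO m,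
      (∃ p : List Bool, p ≠ [] ∧ p <+: γ ∧ p ≠ γ ∧ p <:+ ω) ∨
      (∃ p : List Bool, p ≠ [] ∧ p <+: ω ∧ p ≠ ω ∧ p <:+ γ) := by
  classical
  obtain ⟨hlen, hbf⟩ := hγ
  obtain ⟨j, hj⟩ := hmo
  have hγne : γ ≠ [] := by
    intro h; rw [h] at hlen; simp at hlen
  -- Case 1 : γ starts with 0
  rcases hhead : γ with _ | ⟨b, γ'⟩
  · exact absurd hhead hγne
  rw [← hhead]
  cases b with
  | false =>
    refine ⟨true :: pad m ++ [false], mem_arch0 hm (isDyck_pad m) (by simp), Or.inl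
      ⟨[false], by simp, ⟨γ', by rw [hhead]; simp⟩, ?_, ⟨true :: pad m, by simp⟩⟩⟩
    intro h
    have := congrArg List.length h
    simp at this
    omega
  | true =>
  by_cases hneg : ∃ k, f γ k < 0
  -- Case 2a : the path goes strictly below 0 somewhere
  · set ℓ := Nat.find hneg with hℓdef
    have hℓlt : f γ ℓ < 0 := Nat.find_spec hneg
    have hmin : ∀ k, k < ℓ → ¬ f γ k < 0 := fun k hk => Nat.find_min hneg hk
    have hℓpos : 1 ≤ ℓ := by
      rcases Nat.eq_zero_or_pos ℓ with h | h
      · rw [h] at hℓlt; simp at hℓlt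
      · exact h
    have hle : ℓ ≤ γ.length := by
      by_contra hh
      apply hmin γ.length (by omega)
      rw [f_of_length_le γ (le_refl _)]
      rw [f_of_length_le γ (by omega : γ.length ≤ ℓ)] at hℓlt
      exact hℓlt
    have hℓ1 : ℓ - 1 + 1 = ℓ := by omega
    have hprev : 0 ≤ f γ (ℓ - 1) := not_lt.1 (hmin (ℓ-1) (by omega))
    have hdown : f γ ℓ = f γ (ℓ-1) - 1 := by
      rcases f_step γ (ℓ-1) with hs | hs | hs <;> rw [hℓ1] at hs <;> omega
    have hprev0 : f γ (ℓ-1) = 0 := by omega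
    have htake : γ.take ℓ = γ.take (ℓ-1) ++ [false] := by
      have h6 := f_step_down (γ := γ) (k := ℓ-1) (by rw [hℓ1]; omega)
      rw [hℓ1] at h6; exact h6
    have hp'D : IsDyck (γ.take (ℓ-1)) := by
      rw [isDyck_iff]
      refine ⟨hprev0, fun k => ?_⟩
      rw [List.take_take]
      exact not_lt.1 (hmin _ (by omega))
    have hlp' : (γ.take (ℓ-1)).length = ℓ - 1 := by
      rw [List.length_take]; omega
    have heven := length_even_of_sur_zero (show sur (γ.take (ℓ-1)) = 0 from hprev0)
    set ct := (γ.take (ℓ-1)).count true with hct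
    have hctm : ct ≤ m := by omega
    have hβD : IsDyck (pad (m - ct) ++ γ.take (ℓ-1)) :=
      isDyck_append (isDyck_pad _) hp'D
    have hβl : (pad (m - ct) ++ γ.take (ℓ-1)).length = 2*m := by
      simp [hlp']; omega
    refine ⟨true :: (pad (m - ct) ++ γ.take (ℓ-1)) ++ [false],
      mem_arch0 hm hβD hβl, Or.inl ⟨γ.take ℓ, ?_, List.take_prefix _ _, ?_, ?_⟩⟩
    · rw [htake]; simp
    · intro h
      have := congrArg List.length h
      rw [List.length_take] at this
      omega
    · refine ⟨true :: pad (m - ct), ?_⟩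
      rw [htake]
      simp
  -- Case 2b : the path stays nonnegative
  · push_neg at hneg
    have hpos : ∀ k, 0 ≤ f γ k := hneg
    have hsurnn : 0 ≤ sur γ := by
      rw [← f_of_length_le γ (le_refl _)]; exact hpos _
    have hcc : γ.count true + γ.count false = 2*m+2 := by
      rw [count_add_count, hlen]
    have hsdef : sur γ = (γ.count true : ℤ) - (γ.count false : ℤ) := rfl
    by_cases hz : sur γ = 0
    -- Case 2b-Dyck : γ is a Dyck word
    · have hD : IsDyck γ := by
        rw [isDyck_iff]
        exact ⟨hz, fun k => hpos k⟩
      obtain ⟨α, β, hαD, hβD, hdec⟩ := dyck_last_arch hD hγne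
      have hlens : α.length + β.length + 2 = 2*m + 2 := by
        have := congrArg List.length hdec
        rw [hlen] at this
        simp at this
        omega
      have hαeven := length_even_of_sur_zero (sur_eq_zero_of_isDyck hαD)
      have hβeven := length_even_of_sur_zero (sur_eq_zero_of_isDyck hβD)
      by_cases hαle : α.length ≤ m + 1
      -- Case 2b-Dyck-excl : γ is in the main set, hence must be an excluded word
      · have hmem : γ ∈ {w | ∃ (i : ℕ) (α β : List Bool), i ≤ (m + 1) / 2 ∧
            DyckLen α (2 * i) ∧ DyckLen β (2 * (m - i)) ∧
            w = α ++ true :: β ++ [false]} :=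
          ⟨α.count true, α, β, by omega, ⟨hαD, by omega⟩, ⟨hβD, by omega⟩, hdec⟩
        have hexcl : γ ∈ {w | ∃ α' β' : List Bool, DyckLen α' (m - 1) ∧
            DyckLen β' (m - 1) ∧ w = true :: α' ++ false :: true :: β' ++ [false]} := by
          by_contra hh
          exact hγn ⟨hmem, hh⟩
        obtain ⟨α', β', ⟨hα'D, hα'l⟩, ⟨hβ'D, hβ'l⟩, hγ2⟩ := hexcl
        rcases Nat.lt_or_ge m 2 with hm1 | hm2
        -- m = 1 : the excluded word 1010 is not bifix-free, contradiction
        · exfalso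
          have hm1' : m = 1 := by omega
          have hα'nil : α' = [] := List.length_eq_zero_iff.1 (by omega)
          have hβ'nil : β' = [] := List.length_eq_zero_iff.1 (by omega)
          rw [hα'nil, hβ'nil] at hγ2
          simp at hγ2
          exact hbf [true, false] (by simp) (by rw [hγ2]; decide)
            (by rw [hγ2]; decide) (by rw [hγ2]; decide)
        -- m ≥ 3 : match the prefix 1·α'·0 of γ with a suffix of (10)^((m+1)/2)·1·α'·0
        · have hm3 : 3 ≤ m := by omega
          refine ⟨pad (j+1) ++ (true :: α' ++ [false]), ⟨⟨j+1, pad (j+1), α',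
            by omega, ⟨isDyck_pad _, by simp⟩, ⟨hα'D, by omega⟩, by simp⟩, ?_⟩,
            Or.inl ⟨true :: α' ++ [false], by simp, ?_, ?_, ⟨pad (j+1), rfl⟩⟩⟩
          · rintro ⟨x, y, ⟨hxD, hxl⟩, ⟨hyD, hyl⟩, hw⟩
            obtain ⟨x', hx'⟩ := isDyck_head hxD (by
              intro h; rw [h] at hxl; simp at hxl; omega)
            rw [hx'] at hw
            have hpadeq : pad (j+1) ++ (true :: α' ++ [false])
                = true :: false :: (pad j ++ (true :: α' ++ [false])) := by
              simp [pad]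
            rw [hpadeq] at hw
            simp at hw
          · exact ⟨true :: β' ++ [false], by rw [hγ2]; simp⟩
          · intro h
            have := congrArg List.length h
            rw [hlen] at this
            simp [hα'l] at this
            omega
      -- Case 2b-Dyck-short : last arch of γ is short, use it as a prefix of ω
      · have hβc : β.length = 2 * β.count true := hβeven
        set c := β.count true with hc
        have hc1 : c + 1 ≤ (m+1)/2 := by omega
        have hAD : IsDyck (true :: β ++ [false]) := isDyck_arch hβD
        have hA : DyckLen (true :: β ++ [false]) (2*(c+1)) := ⟨hAD, by simp; omega⟩
        have hpadD : DyckLen (pad (m - (c+1))) (2*(m-(c+1))) := ⟨isDyck_pad _, by simp⟩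
        refine ⟨(true :: β ++ [false]) ++ true :: pad (m - (c+1)) ++ [false],
          ⟨⟨c+1, true :: β ++ [false], pad (m - (c+1)), hc1, hA, hpadD, rfl⟩, ?_⟩,
          Or.inr ⟨true :: β ++ [false], by simp, ⟨true :: pad (m-(c+1)) ++ [false], by simp⟩,
            ?_, ⟨α, by rw [hdec, List.append_assoc]⟩⟩⟩
        · rintro ⟨x, y, hx, hy, hw⟩
          have h1 := excl_sur hm hx hy hw
          have h2 := sur_take_arch hAD (isDyck_pad (m - (c+1))) m
            (by simp; omega) (by simp; omega)
          omega
        · intro h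
          have := congrArg List.length h
          simp at this
          try omega
    -- Case 2b-high : γ ends at height ≥ 2
    · have hfin : f γ γ.length = sur γ := f_of_length_le γ (le_refl _)
      have hc2 : 2 ≤ sur γ := by omega
      set c := sur γ with hcdef
      -- t : the last position where the running surplus equals c - 1
      obtain ⟨k, -, hk2, hk3⟩ := ivt γ (c-1) 0 γ.length (Nat.zero_le _)
        (by simp; omega) (by omega)
      set t := Nat.findGreatest (fun k => f γ k = c - 1) γ.length with htdef
      have hPt : f γ t = c - 1 :=
        Nat.findGreatest_spec (P := fun k => f γ k = c - 1) hk2 hk3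
      have htle : t ≤ γ.length := Nat.findGreatest_le γ.length
      have hgr : ∀ kk, t < kk → kk ≤ γ.length → f γ kk ≠ c - 1 := fun kk h1 h2 =>
        Nat.findGreatest_is_greatest (P := fun k => f γ k = c - 1) h1 h2
      have hge : ∀ kk, t < kk → kk ≤ γ.length → c ≤ f γ kk := by
        intro kk h1 h2
        by_contra hh
        obtain ⟨k', hk'1, hk'2, hk'3⟩ := ivt γ (c-1) kk γ.length h2 (by omega) (by omega)
        exact hgr k' (by omega) hk'2 hk'3
      have ht1 : 1 ≤ t := by
        rcases Nat.eq_zero_or_pos t with h | h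
        · rw [h] at hPt; simp at hPt; omega
        · exact h
      have htlt : t < γ.length := by
        rcases Nat.lt_or_ge t γ.length with h | h
        · exact h
        · exfalso
          have : t = γ.length := by omega
          rw [this, hfin] at hPt
          omega
      have hup : f γ (t+1) = f γ t + 1 := by
        have h1 := hge (t+1) (by omega) (by omega)
        rcases f_step γ t with hs | hs | hs <;> omega
      have htk : γ.take (t+1) = γ.take t ++ [true] := f_step_up hup
      have hft1 : f γ (t+1) = c := by omega
      have hgetelem : γ[t]'(htlt) = true := by
        have h1 := List.take_succ (l := γ) (i := t)
        rw [htk, List.getElem?_eq_getElem htlt] at h1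
        have h2 := List.append_cancel_left h1
        simp at h2
        exact h2
      have hdrop : γ.drop t = true :: γ.drop (t+1) := by
        rw [List.drop_eq_getElem_cons htlt, hgetelem]
      have hs'len : (γ.drop (t+1)).length = γ.length - (t+1) := by simp
      have hsplit : sur (γ.take (t+1)) + sur (γ.drop (t+1)) = sur γ := by
        rw [← sur_append, List.take_append_drop]
      have hs'sur : sur (γ.drop (t+1)) = 0 := by
        have : sur (γ.take (t+1)) = c := hft1
        omega
      have hs'D : IsDyck (γ.drop (t+1)) := by
        rw [isDyck_iff]
        refine ⟨hs'sur, fun kk => ?_⟩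
        rcases Nat.lt_or_ge kk (γ.drop (t+1)).length with hkk | hkk
        · have h1 := f_add γ (t+1) kk
          have h2 := hge (t+1+kk) (by omega) (by omega)
          rw [hft1] at h1
          omega
        · rw [List.take_of_length_le hkk, hs'sur]
      have hs'even := length_even_of_sur_zero hs'sur
      set c2 := (γ.drop (t+1)).count true with hc2def
      have hc2m : c2 ≤ m := by omega
      have hβD : IsDyck (γ.drop (t+1) ++ pad (m - c2)) :=
        isDyck_append hs'D (isDyck_pad _)
      have hβl : (γ.drop (t+1) ++ pad (m - c2)).length = 2*m := by
        simp [hs'len]; omega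
      refine ⟨true :: (γ.drop (t+1) ++ pad (m - c2)) ++ [false],
        mem_arch0 hm hβD hβl,
        Or.inr ⟨γ.drop t, by rw [hdrop]; simp, ?_, ?_, ⟨γ.take t, List.take_append_drop t γ⟩⟩⟩
      · rw [hdrop]
        refine ⟨pad (m - c2) ++ [false], ?_⟩
        simp
      · intro h
        have := congrArg List.length h
        simp at this
        omega
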